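/- (Cut-free provability of P(x)⊢⊥ in CLKID^ω without substitution) Let P be the inductive predicate defined by the single production P(x) ⇐ P(sx). In cut-free CLKID^ω, with the standard case-distinction left-unfolding rule (UL) (which derives P(x),Γ⊢Δ from y=x,P(sy),Γ⊢Δ with y fresh), the sequent P(x)⊢⊥ is provable without any use of the rule (Subst). -/

import Mathlib

set_option maxHeartbeats 1000000

namespace CyclicProofs

/-! ### Signatures, terms and substitutions of FOL_ID.
Terms are in locally-nameless style: `fvar` are free variables (named by naturals)
and `bvar` are de Bruijn indices for quantifier-bound variables. -/

structure Signature where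
  Func : Type
  arity : Func → ℕ
  OrdPred : Type
  ordArity : OrdPred → ℕ
  IndPred : Type
  indArity : IndPred → ℕ

inductive Term (S : Signature) : Type where
  | fvar : ℕ → Term S
  | bvar : ℕ → Term S
  | func : (f : S.Func) → (Fin (S.arity f) → Term S) → Term S

variable {S : Signature}

def Term.fv : Term S → Set ℕ
  | .fvar x => {x}
  | .bvar _ => ∅
  | .func _ a => ⋃ i, Term.fv (a i)

/-- A term is *atomic* if it is a variable or a constant. -/
def Term.IsAtomic : Term S → Prop
  | .fvar _ => True
  | .bvar _ => False
  | .func f _ => S.arity f = 0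

/-- Substitutions: (total) maps from variables to terms; a substitution
represents the finite mapping given by its restriction to its domain
`Subst.dom` (the set of variables it moves). -/
abbrev Subst (S : Signature) := ℕ → Term S

def Term.subst : Term S → Subst S → Term S
  | .fvar x, θ => θ x
  | .bvar n, _ => .bvar n
  | .func f a, θ => .func f (fun i => Term.subst (a i) θ)

def Subst.dom (θ : Subst S) : Set ℕ := {x | θ x ≠ Term.fvar x}

def Subst.img (θ : Subst S) : Set (Term S) := θ '' Subst.dom θ

/-- An *atomic* substitution: every term in its image is a variable or a constant. -/
def Subst.Atomic (θ : Subst S) : Prop := ∀ x : ℕ, Term.IsAtomic (θ x)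

/-- `Subst.update θ x y` is `θ[x → y]`: the substitution obtained from `θ` by
changing the image of `x` to the variable `y`. -/
def Subst.update (θ : Subst S) (x y : ℕ) : Subst S :=
  fun z => if z = x then Term.fvar y else θ z

/-- Composition `θ₁θ₂`, satisfying `t[θ₁θ₂] = (t[θ₁])[θ₂]`. -/
def Subst.comp (θ₁ θ₂ : Subst S) : Subst S := fun x => Term.subst (θ₁ x) θ₂

theorem Term.subst_comp (t : Term S) (θ₁ θ₂ : Subst S) :
    Term.subst t (Subst.comp θ₁ θ₂) = Term.subst (Term.subst t θ₁) θ₂ := by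
  induction t with
  | fvar x => rfl
  | bvar n => rfl
  | func f a ih => simp only [Term.subst]; exact congrArg _ (funext fun i => ih i)

/-- The partial-substitution closure `C_ps(Θ, X)`: the smallest set of substitutions
containing `Θ` and closed under overwriting `θ[x→y]` for `x, y ∈ X` and under
composition. -/
inductive Cps {S : Signature} (Θ : Set (Subst S)) (X : Set ℕ) : Subst S → Prop where
  | base {θ : Subst S} : θ ∈ Θ → Cps Θ X θ
  | update {θ : Subst S} {x y : ℕ} :
      Cps Θ X θ → x ∈ X → y ∈ X → Cps Θ X (Subst.update θ x y)
  | comp {θ₁ θ₂ : Subst S} :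
      Cps Θ X θ₁ → Cps Θ X θ₂ → Cps Θ X (Subst.comp θ₁ θ₂)

/-! ### Formulas of FOL_ID -/

inductive Formula (S : Signature) : Type where
  | ind : (P : S.IndPred) → (Fin (S.indArity P) → Term S) → Formula S
  | ord : (Q : S.OrdPred) → (Fin (S.ordArity Q) → Term S) → Formula S
  | eq : Term S → Term S → Formula S
  | not : Formula S → Formula S
  | or : Formula S → Formula S → Formula S
  | and : Formula S → Formula S → Formula S
  | imp : Formula S → Formula S → Formula S
  | ex : Formula S → Formula S
  | all : Formula S → Formula S

def Formula.fv : Formula S → Set ℕ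
  | .ind _ a => ⋃ i, Term.fv (a i)
  | .ord _ a => ⋃ i, Term.fv (a i)
  | .eq t u => t.fv ∪ u.fv
  | .not φ => φ.fv
  | .or φ ψ => φ.fv ∪ ψ.fv
  | .and φ ψ => φ.fv ∪ ψ.fv
  | .imp φ ψ => φ.fv ∪ ψ.fv
  | .ex φ => φ.fv
  | .all φ => φ.fv

/-- Capture-avoiding substitution of free variables (bound variables are de
Bruijn indices, so no capture can occur). -/
def Formula.subst : Formula S → Subst S → Formula S
  | .ind P a, θ => .ind P (fun i => Term.subst (a i) θ)
  | .ord Q a, θ => .ord Q (fun i => Term.subst (a i) θ)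
  | .eq t u, θ => .eq (t.subst θ) (u.subst θ)
  | .not φ, θ => .not (φ.subst θ)
  | .or φ ψ, θ => .or (φ.subst θ) (ψ.subst θ)
  | .and φ ψ, θ => .and (φ.subst θ) (ψ.subst θ)
  | .imp φ ψ, θ => .imp (φ.subst θ) (ψ.subst θ)
  | .ex φ, θ => .ex (φ.subst θ)
  | .all φ, θ => .all (φ.subst θ)

/-- Opening: replace the bound variable `k` by the term `u`
(used to instantiate a quantifier). -/
def Term.openT : Term S → ℕ → Term S → Term S
  | .fvar x, _, _ => .fvar x
  | .bvar n, k, u => if n = k then u else .bvar n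
  | .func f a, k, u => .func f (fun i => Term.openT (a i) k u)

def Formula.openF : Formula S → ℕ → Term S → Formula S
  | .ind P a, k, u => .ind P (fun i => Term.openT (a i) k u)
  | .ord Q a, k, u => .ord Q (fun i => Term.openT (a i) k u)
  | .eq t v, k, u => .eq (t.openT k u) (v.openT k u)
  | .not φ, k, u => .not (φ.openF k u)
  | .or φ ψ, k, u => .or (φ.openF k u) (ψ.openF k u)
  | .and φ ψ, k, u => .and (φ.openF k u) (ψ.openF k u)
  | .imp φ ψ, k, u => .imp (φ.openF k u) (ψ.openF k u)
  | .ex φ, k, u => .ex (φ.openF (k+1) u)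
  | .all φ, k, u => .all (φ.openF (k+1) u)

/-- The formula is an inductive-predicate atom. -/
def Formula.IsInd : Formula S → Prop
  | .ind _ _ => True
  | _ => False

noncomputable instance instDecEqFormula (S : Signature) : DecidableEq (Formula S) :=
  Classical.decEq _

/-! ### Sequents -/

/-- A sequent `Γ ⊢ Δ`: a pair of finite sets of formulas. -/
abbrev GSequent (F : Type) := Finset F × Finset F

def fvSeq (e : GSequent (Formula S)) : Set ℕ :=
  {x | (∃ φ ∈ e.1, x ∈ Formula.fv φ) ∨ (∃ φ ∈ e.2, x ∈ Formula.fv φ)}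

noncomputable def substSeq (e : GSequent (Formula S)) (θ : Subst S) : GSequent (Formula S) :=
  (e.1.image (Formula.subst · θ), e.2.image (Formula.subst · θ))

/-! ### Inductive definition sets -/

/-- A production `P(t⃗) ⇐ Q₁(u⃗₁), …, Qₙ(u⃗ₙ), P₁(t⃗₁), …, Pₘ(t⃗ₘ)`.
Its variables are the free variables occurring in it. -/
structure Production (S : Signature) where
  pred : S.IndPred
  args : Fin (S.indArity pred) → Term S
  ordPrems : List ((Q : S.OrdPred) × (Fin (S.ordArity Q) → Term S))
  indPrems : List ((P : S.IndPred) × (Fin (S.indArity P) → Term S))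

def Production.fv (pr : Production S) : Set ℕ :=
  (⋃ i, Term.fv (pr.args i)) ∪
  {x | ∃ q ∈ pr.ordPrems, ∃ i, x ∈ Term.fv (q.2 i)} ∪
  {x | ∃ p ∈ pr.indPrems, ∃ i, x ∈ Term.fv (p.2 i)}

/-- The case distinction of `Γ, P(u⃗) ⊢ Δ` for a production `pr` (whose variables
are renamed by `σ`):  `Γ, u⃗ = t⃗[σ], Q₁(u⃗₁)[σ], …, P₁(t⃗₁)[σ], … ⊢ Δ`. -/
noncomputable def caseDist (Γ Δ : Finset (Formula S)) (P : S.IndPred)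
    (u : Fin (S.indArity P) → Term S) (pr : Production S) (σ : Subst S) :
    GSequent (Formula S) :=
  @dite _ (pr.pred = P) (Classical.dec _)
    (fun h =>
      (Γ ∪ Finset.image (fun i : Fin (S.indArity P) =>
            Formula.eq (u i)
              (Term.subst (pr.args (Fin.cast (congrArg S.indArity h).symm i)) σ))
          Finset.univ
         ∪ (pr.ordPrems.map (fun q => Formula.ord q.1 (fun i => Term.subst (q.2 i) σ))).toFinset
         ∪ (pr.indPrems.map (fun p => Formula.ind p.1 (fun i => Term.subst (p.2 i) σ))).toFinset,
       Δ))
    (fun _ => (Γ, Δ))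

/-- `σ` renames the variables of the production `pr` to pairwise distinct
fresh variables (avoiding `avoid`). -/
def Freshening (σ : Subst S) (pr : Production S) (avoid : Set ℕ) : Prop :=
  (∀ z : ℕ, ∃ y : ℕ, σ z = Term.fvar y) ∧
  (∀ z ∈ Production.fv pr, ∀ y : ℕ, σ z = Term.fvar y → y ∉ avoid) ∧
  (∀ z₁ ∈ Production.fv pr, ∀ z₂ ∈ Production.fv pr, σ z₁ = σ z₂ → z₁ = z₂)

/-! ### Standard-model semantics -/

structure Structure (S : Signature) where
  Dom : Type
  nonempty : Nonempty Dom
  funcI : (f : S.Func) → (Fin (S.arity f) → Dom) → Dom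
  ordI : (Q : S.OrdPred) → (Fin (S.ordArity Q) → Dom) → Prop

noncomputable def Structure.dflt (M : Structure S) : M.Dom := Classical.choice M.nonempty

def Term.eval (M : Structure S) (ρ η : ℕ → M.Dom) : Term S → M.Dom
  | .fvar x => ρ x
  | .bvar n => η n
  | .func f a => M.funcI f (fun i => Term.eval M ρ η (a i))

/-- Interpretations of the inductive predicates in a structure. -/
abbrev IndInterp (M : Structure S) := (P : S.IndPred) → (Fin (S.indArity P) → M.Dom) → Prop

/-- `I` is a prefixed point of the monotone operator determined by the
definition set `Φ`. -/
def PrefixedPoint (Φ : Finset (Production S)) (M : Structure S) (I : IndInterp M) : Prop :=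
  ∀ pr ∈ Φ, ∀ ρ : ℕ → M.Dom,
    (∀ q ∈ pr.ordPrems, M.ordI q.1 (fun i => Term.eval M ρ (fun _ => M.dflt) (q.2 i))) →
    (∀ p ∈ pr.indPrems, I p.1 (fun i => Term.eval M ρ (fun _ => M.dflt) (p.2 i))) →
    I pr.pred (fun i => Term.eval M ρ (fun _ => M.dflt) (pr.args i))

/-- The standard (least fixed point) interpretation of the inductive predicates. -/
def stdInterp (Φ : Finset (Production S)) (M : Structure S) : IndInterp M :=
  fun P v => ∀ I : IndInterp M, PrefixedPoint Φ M I → I P v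

def push (M : Structure S) (d : M.Dom) (η : ℕ → M.Dom) : ℕ → M.Dom
  | 0 => d
  | n + 1 => η n

def Formula.sat (M : Structure S) (I : IndInterp M) :
    Formula S → (ℕ → M.Dom) → (ℕ → M.Dom) → Prop
  | .ind P a, ρ, η => I P (fun i => Term.eval M ρ η (a i))
  | .ord Q a, ρ, η => M.ordI Q (fun i => Term.eval M ρ η (a i))
  | .eq t u, ρ, η => Term.eval M ρ η t = Term.eval M ρ η u
  | .not φ, ρ, η => ¬ Formula.sat M I φ ρ η
  | .or φ ψ, ρ, η => Formula.sat M I φ ρ η ∨ Formula.sat M I ψ ρ η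
  | .and φ ψ, ρ, η => Formula.sat M I φ ρ η ∧ Formula.sat M I ψ ρ η
  | .imp φ ψ, ρ, η => Formula.sat M I φ ρ η → Formula.sat M I ψ ρ η
  | .ex φ, ρ, η => ∃ d : M.Dom, Formula.sat M I φ ρ (push M d η)
  | .all φ, ρ, η => ∀ d : M.Dom, Formula.sat M I φ ρ (push M d η)

/-- Validity of a sequent with respect to the standard models. -/
def validSeq (Φ : Finset (Production S)) (e : GSequent (Formula S)) : Prop :=
  ∀ (M : Structure S) (ρ : ℕ → M.Dom),
    (∀ φ ∈ e.1, Formula.sat M (stdInterp Φ M) φ ρ (fun _ => M.dflt)) →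
    ∃ ψ ∈ e.2, Formula.sat M (stdInterp Φ M) ψ ρ (fun _ => M.dflt)
/-! ### A generic framework for cyclic and infinitary proof systems.

A derivation system is given by a type of sequents `Q`, a type `F` of trace
tokens (occurrences of inductive-predicate atoms in antecedents), a type `N`
of rule names, a type `Sb` of substitutions, a type `App c ps` of rule
instances with conclusion `c` and premise list `ps`, a trace relation and a
progress relation along rule instances, and the set of substitutions used by
a rule instance. -/

structure DerivSystem (Q F N Sb : Type) where
  App : Q → List Q → Type
  name : {c : Q} → {ps : List Q} → App c ps → N
  trace : {c : Q} → {ps : List Q} → App c ps → ℕ → F → F → Prop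
  prog : {c : Q} → {ps : List Q} → App c ps → ℕ → F → F → Prop
  substs : {c : Q} → {ps : List Q} → App c ps → Set Sb
  inAnt : Q → F → Prop

variable {Q F N Sb : Type}

/-- A pre-proof of a cyclic-proof system: a finite derivation tree (nodes are
lists of child indices, the root is `[]`), whose non-axiom leaves (*buds*) are
each assigned an internal node (its *companion*) labeled by a syntactically
identical sequent. Every non-bud node carries a rule instance. -/
structure CPreProof (D : DerivSystem Q F N Sb) where
  dom : Set (List ℕ)
  fin : dom.Finite
  root_mem : ([] : List ℕ) ∈ dom
  down : ∀ (p : List ℕ) (i : ℕ), p ++ [i] ∈ dom → p ∈ dom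
  seq : List ℕ → Q
  prems : List ℕ → List Q
  bud : List ℕ → Bool
  rule : ∀ (p : List ℕ), p ∈ dom → bud p = false → D.App (seq p) (prems p)
  child_mem : ∀ (p : List ℕ), p ∈ dom → bud p = false →
      ∀ i : ℕ, (p ++ [i] ∈ dom ↔ i < (prems p).length)
  child_seq : ∀ (p : List ℕ) (hp : p ∈ dom) (hb : bud p = false)
      (i : ℕ) (h : i < (prems p).length), seq (p ++ [i]) = (prems p).get ⟨i, h⟩
  bud_leaf : ∀ (p : List ℕ), p ∈ dom → bud p = true → ∀ i : ℕ, p ++ [i] ∉ dom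
  comp : List ℕ → List ℕ
  comp_mem : ∀ (p : List ℕ), p ∈ dom → bud p = true → comp p ∈ dom
  comp_not_bud : ∀ (p : List ℕ), p ∈ dom → bud p = true → bud (comp p) = false
  comp_seq : ∀ (p : List ℕ), p ∈ dom → bud p = true → seq (comp p) = seq p

variable {D : DerivSystem Q F N Sb}

/-- An infinite path in the graph of a cyclic pre-proof (edges: conclusions to
premises, and buds to their companions). -/
structure CPath (T : CPreProof D) where
  pos : ℕ → List ℕ
  mem : ∀ n, pos n ∈ T.dom
  step : ∀ n, (T.bud (pos n) = true ∧ pos (n + 1) = T.comp (pos n)) ∨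
              (∃ i : ℕ, pos (n + 1) = pos n ++ [i] ∧ pos n ++ [i] ∈ T.dom)

/-- One trace step from node `p` (token `C`) to node `p'` (token `C'`);
`b = true` records a progressing step. -/
def CPreProof.tstep (T : CPreProof D) (p p' : List ℕ) (C C' : F) (b : Bool) : Prop :=
  (T.bud p = true ∧ p' = T.comp p ∧ C' = C ∧ D.inAnt (T.seq p) C ∧ b = false) ∨
  (∃ (hp : p ∈ T.dom) (hb : T.bud p = false) (i : ℕ), p' = p ++ [i] ∧
      D.trace (T.rule p hp hb) i C C' ∧
      (b = true → D.prog (T.rule p hp hb) i C C'))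

/-- There is an infinitely progressing trace following (a tail of) the path. -/
def CPath.hasInfTrace {T : CPreProof D} (π : CPath T) : Prop :=
  ∃ (k : ℕ) (C : ℕ → F) (b : ℕ → Bool),
    (∀ n, k ≤ n → T.tstep (π.pos n) (π.pos (n + 1)) (C n) (C (n + 1)) (b n)) ∧
    (∀ m, ∃ n, m ≤ n ∧ b n = true)

/-- The global trace condition. -/
def CPreProof.GTC (T : CPreProof D) : Prop := ∀ π : CPath T, π.hasInfTrace

def CPreProof.namesUsed (T : CPreProof D) : Set N :=
  {ν | ∃ (p : List ℕ) (hp : p ∈ T.dom) (hb : T.bud p = false), D.name (T.rule p hp hb) = ν}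

/-- `Θ(Pr)`: the set of substitutions used in instances of (Subst) in `Pr`. -/
def CPreProof.Theta (T : CPreProof D) : Set Sb :=
  {s | ∃ (p : List ℕ) (hp : p ∈ T.dom) (hb : T.bud p = false), s ∈ D.substs (T.rule p hp hb)}

/-- Identify a bud with its companion. -/
def CPreProof.resolve (T : CPreProof D) (q : List ℕ) : List ℕ :=
  if T.bud q then T.comp q else q

/-- Provability by a cyclic proof using only rules whose names are `allowed`. -/
def DerivSystem.ProvableWith (D : DerivSystem Q F N Sb) (allowed : Set N) (e : Q) : Prop :=
  ∃ T : CPreProof D, T.seq [] = e ∧ T.GTC ∧ T.namesUsed ⊆ allowed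

/-- A chain of applications of the rule named `sn` (i.e. (Subst)) and
bud-companion identifications, from `q` up to a node `q'` carrying a
rule instance not named `sn`. -/
inductive CPreProof.substChain (T : CPreProof D) (sn : N) : List ℕ → List ℕ → Prop where
  | here {q : List ℕ} (hq : q ∈ T.dom) (hb : T.bud q = false)
      (hr : D.name (T.rule q hq hb) ≠ sn) : substChain T sn q q
  | jump {q q' : List ℕ} (hq : q ∈ T.dom) (hb : T.bud q = true) :
      substChain T sn (T.comp q) q' → substChain T sn q q'
  | sub {q q' : List ℕ} (hq : q ∈ T.dom) (hb : T.bud q = false)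
      (hs : D.name (T.rule q hq hb) = sn) :
      substChain T sn (q ++ [0]) q' → substChain T sn q q'

/-- A trace from the token `C` at `q`, through applications of the rule named
`sn` ((Subst)) and bud-companion identifications, followed by one application
of a rule not named `sn`, into its `j`-th premise, ending in the token `C'`;
`b = true` records that the final step progresses. -/
inductive CPreProof.chunkTrace (T : CPreProof D) (sn : N) :
    List ℕ → ℕ → F → F → Bool → Prop where
  | here {q : List ℕ} {j : ℕ} {C C' : F} {b : Bool}
      (hq : q ∈ T.dom) (hb : T.bud q = false)
      (hr : D.name (T.rule q hq hb) ≠ sn)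
      (ht : D.trace (T.rule q hq hb) j C C')
      (hpr : b = true → D.prog (T.rule q hq hb) j C C') :
      chunkTrace T sn q j C C' b
  | jump {q : List ℕ} {j : ℕ} {C C' : F} {b : Bool}
      (hq : q ∈ T.dom) (hb : T.bud q = true) :
      chunkTrace T sn (T.comp q) j C C' b → chunkTrace T sn q j C C' b
  | sub {q : List ℕ} {j : ℕ} {C C₁ C' : F} {b : Bool}
      (hq : q ∈ T.dom) (hb : T.bud q = false)
      (hs : D.name (T.rule q hq hb) = sn)
      (ht : D.trace (T.rule q hq hb) 0 C C₁) :
      chunkTrace T sn (q ++ [0]) j C₁ C' b → chunkTrace T sn q j C C' b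

/-- The step at time `m` of the path `π'` passes through a (Subst) rule or a
bud-companion edge. -/
def CPreProof.PassAt (T : CPreProof D) (sn : N) (π : CPath T) (m : ℕ) : Prop :=
  (T.bud (π.pos m) = true ∧ π.pos (m + 1) = T.comp (π.pos m)) ∨
  (∃ (hp : π.pos m ∈ T.dom) (hb : T.bud (π.pos m) = false),
      D.name (T.rule (π.pos m) hp hb) = sn ∧ π.pos (m + 1) = π.pos m ++ [0])

/-- The step at time `m` of the path goes to the `j`-th premise of a rule
instance not named `sn`. -/
def CPreProof.ChildAt (T : CPreProof D) (sn : N) (π : CPath T) (m j : ℕ) : Prop :=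
  π.pos (m + 1) = π.pos m ++ [j] ∧
  ∃ (hp : π.pos m ∈ T.dom) (hb : T.bud (π.pos m) = false),
    D.name (T.rule (π.pos m) hp hb) ≠ sn

/-- The step at time `m` of the path is a bud-companion edge. -/
def CPreProof.BudAt (T : CPreProof D) (π : CPath T) (m : ℕ) : Prop :=
  T.bud (π.pos m) = true ∧ π.pos (m + 1) = T.comp (π.pos m)

/-! #### Infinitary pre-proofs (possibly infinite derivation trees, all of
whose leaves are axioms, i.e. every node carries a rule instance). -/

structure IPreProof (D : DerivSystem Q F N Sb) where
  dom : Set (List ℕ)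
  root_mem : ([] : List ℕ) ∈ dom
  down : ∀ (p : List ℕ) (i : ℕ), p ++ [i] ∈ dom → p ∈ dom
  seq : List ℕ → Q
  prems : List ℕ → List Q
  rule : ∀ (p : List ℕ), p ∈ dom → D.App (seq p) (prems p)
  child_mem : ∀ (p : List ℕ), p ∈ dom → ∀ i : ℕ, (p ++ [i] ∈ dom ↔ i < (prems p).length)
  child_seq : ∀ (p : List ℕ) (hp : p ∈ dom) (i : ℕ) (h : i < (prems p).length),
      seq (p ++ [i]) = (prems p).get ⟨i, h⟩

structure IPath (T : IPreProof D) where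
  pos : ℕ → List ℕ
  mem : ∀ n, pos n ∈ T.dom
  step : ∀ n, ∃ i : ℕ, pos (n + 1) = pos n ++ [i] ∧ pos n ++ [i] ∈ T.dom

def IPreProof.tstep (T : IPreProof D) (p p' : List ℕ) (C C' : F) (b : Bool) : Prop :=
  ∃ (hp : p ∈ T.dom) (i : ℕ), p' = p ++ [i] ∧
    D.trace (T.rule p hp) i C C' ∧ (b = true → D.prog (T.rule p hp) i C C')

def IPath.hasInfTrace {T : IPreProof D} (π : IPath T) : Prop :=
  ∃ (k : ℕ) (C : ℕ → F) (b : ℕ → Bool),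
    (∀ n, k ≤ n → T.tstep (π.pos n) (π.pos (n + 1)) (C n) (C (n + 1)) (b n)) ∧
    (∀ m, ∃ n, m ≤ n ∧ b n = true)

/-- The global trace condition for infinitary pre-proofs. -/
def IPreProof.GTC (T : IPreProof D) : Prop := ∀ π : IPath T, π.hasInfTrace

def IPreProof.namesUsed (T : IPreProof D) : Set N :=
  {ν | ∃ (p : List ℕ) (hp : p ∈ T.dom), D.name (T.rule p hp) = ν}

def IPreProof.Theta (T : IPreProof D) : Set Sb :=
  {s | ∃ (p : List ℕ) (hp : p ∈ T.dom), s ∈ D.substs (T.rule p hp)}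
/-! ### The rules of `CLKID^ω` and `LKID^ω` -/

inductive RuleName : Type where
  | ax | wk | cut | subst
  | notL | notR | orL | orR | andL | andR | impL | impR
  | allL | allR | exL | exR | eqL | eqR | ul | ur
  | freshL | frame
  deriving DecidableEq

/-- The substitution `[t/x, u/y]`. -/
def subst2 (x y : ℕ) (t u : Term S) : Subst S :=
  fun z => if z = x then t else if z = y then u else Term.fvar z

/-- Rule instances of `CLKID^ω`/`LKID^ω` (plus the extra rule `(fresh L)`,
which is *not* counted among the `CLKID^ω` rules; see `clkidNames`). -/
inductive RuleApp {S : Signature} (Φ : Finset (Production S)) :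
    GSequent (Formula S) → List (GSequent (Formula S)) → Type where
  | ax (Γ Δ : Finset (Formula S)) (h : (Γ ∩ Δ).Nonempty) :
      RuleApp Φ (Γ, Δ) []
  | wk (Γ Δ Γ' Δ' : Finset (Formula S)) (h1 : Γ' ⊆ Γ) (h2 : Δ' ⊆ Δ) :
      RuleApp Φ (Γ, Δ) [(Γ', Δ')]
  | cut (Γ Δ : Finset (Formula S)) (φ : Formula S) :
      RuleApp Φ (Γ, Δ) [(Γ, insert φ Δ), (insert φ Γ, Δ)]
  | substR (Γ Δ : Finset (Formula S)) (θ : Subst S) (hθ : (Subst.dom θ).Finite) :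
      RuleApp Φ (Γ.image (Formula.subst · θ), Δ.image (Formula.subst · θ)) [(Γ, Δ)]
  | notL (Γ Δ : Finset (Formula S)) (φ : Formula S) :
      RuleApp Φ (insert (Formula.not φ) Γ, Δ) [(Γ, insert φ Δ)]
  | notR (Γ Δ : Finset (Formula S)) (φ : Formula S) :
      RuleApp Φ (Γ, insert (Formula.not φ) Δ) [(insert φ Γ, Δ)]
  | orL (Γ Δ : Finset (Formula S)) (φ ψ : Formula S) :
      RuleApp Φ (insert (Formula.or φ ψ) Γ, Δ) [(insert φ Γ, Δ), (insert ψ Γ, Δ)]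
  | orR (Γ Δ : Finset (Formula S)) (φ ψ : Formula S) :
      RuleApp Φ (Γ, insert (Formula.or φ ψ) Δ) [(Γ, insert φ (insert ψ Δ))]
  | andL (Γ Δ : Finset (Formula S)) (φ ψ : Formula S) :
      RuleApp Φ (insert (Formula.and φ ψ) Γ, Δ) [(insert φ (insert ψ Γ), Δ)]
  | andR (Γ Δ : Finset (Formula S)) (φ ψ : Formula S) :
      RuleApp Φ (Γ, insert (Formula.and φ ψ) Δ) [(Γ, insert φ Δ), (Γ, insert ψ Δ)]
  | impL (Γ Δ : Finset (Formula S)) (φ ψ : Formula S) :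
      RuleApp Φ (insert (Formula.imp φ ψ) Γ, Δ) [(Γ, insert φ Δ), (insert ψ Γ, Δ)]
  | impR (Γ Δ : Finset (Formula S)) (φ ψ : Formula S) :
      RuleApp Φ (Γ, insert (Formula.imp φ ψ) Δ) [(insert φ Γ, insert ψ Δ)]
  | allL (Γ Δ : Finset (Formula S)) (φ : Formula S) (t : Term S) :
      RuleApp Φ (insert (Formula.all φ) Γ, Δ) [(insert (φ.openF 0 t) Γ, Δ)]
  | allR (Γ Δ : Finset (Formula S)) (φ : Formula S) (y : ℕ)
      (hy : y ∉ fvSeq ((Γ, insert (Formula.all φ) Δ) : GSequent (Formula S))) :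
      RuleApp Φ (Γ, insert (Formula.all φ) Δ) [(Γ, insert (φ.openF 0 (Term.fvar y)) Δ)]
  | exL (Γ Δ : Finset (Formula S)) (φ : Formula S) (y : ℕ)
      (hy : y ∉ fvSeq ((insert (Formula.ex φ) Γ, Δ) : GSequent (Formula S))) :
      RuleApp Φ (insert (Formula.ex φ) Γ, Δ) [(insert (φ.openF 0 (Term.fvar y)) Γ, Δ)]
  | exR (Γ Δ : Finset (Formula S)) (φ : Formula S) (t : Term S) :
      RuleApp Φ (Γ, insert (Formula.ex φ) Δ) [(Γ, insert (φ.openF 0 t) Δ)]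
  | eqL (Γ Δ : Finset (Formula S)) (x y : ℕ) (t u : Term S) :
      RuleApp Φ
        (insert (Formula.eq t u) (Γ.image (Formula.subst · (subst2 x y t u))),
         Δ.image (Formula.subst · (subst2 x y t u)))
        [(Γ.image (Formula.subst · (subst2 x y u t)),
          Δ.image (Formula.subst · (subst2 x y u t)))]
  | eqR (Γ Δ : Finset (Formula S)) (t : Term S) :
      RuleApp Φ (Γ, insert (Formula.eq t t) Δ) []
  | ul (Γ Δ : Finset (Formula S)) (P : S.IndPred) (u : Fin (S.indArity P) → Term S)
      (prods : List (Production S)) (σs : List (Subst S))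
      (hlen : prods.length = σs.length) (hnd : prods.Nodup)
      (hall : ∀ pr : Production S, pr ∈ prods ↔ pr ∈ Φ ∧ pr.pred = P)
      (hfresh : ∀ pσ ∈ prods.zip σs,
        Freshening pσ.2 pσ.1
          (fvSeq ((insert (Formula.ind P u) Γ, Δ) : GSequent (Formula S)))) :
      RuleApp Φ (insert (Formula.ind P u) Γ, Δ)
        ((prods.zip σs).map (fun pσ => caseDist Γ Δ P u pσ.1 pσ.2))
  | ur (Γ Δ : Finset (Formula S)) (pr : Production S) (hpr : pr ∈ Φ) (σ : Subst S) :
      RuleApp Φ (Γ, insert (Formula.ind pr.pred (fun i => Term.subst (pr.args i) σ)) Δ)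
        ((pr.ordPrems.map (fun q => (Γ, insert (Formula.ord q.1 (fun i => Term.subst (q.2 i) σ)) Δ)))
          ++ (pr.indPrems.map (fun p => (Γ, insert (Formula.ind p.1 (fun i => Term.subst (p.2 i) σ)) Δ))))
  | freshL (Γ Δ : Finset (Formula S)) (y : ℕ) (t : Term S)
      (hy : y ∉ fvSeq ((Γ, Δ) : GSequent (Formula S)) ∧ y ∉ Term.fv t) :
      RuleApp Φ (Γ, Δ) [(insert (Formula.eq (Term.fvar y) t) Γ, Δ)]

variable {Φ : Finset (Production S)}

def RuleApp.name : {c : GSequent (Formula S)} → {ps : List (GSequent (Formula S))} →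
    RuleApp Φ c ps → RuleName
  | _, _, .ax .. => .ax
  | _, _, .wk .. => .wk
  | _, _, .cut .. => .cut
  | _, _, .substR .. => .subst
  | _, _, .notL .. => .notL
  | _, _, .notR .. => .notR
  | _, _, .orL .. => .orL
  | _, _, .orR .. => .orR
  | _, _, .andL .. => .andL
  | _, _, .andR .. => .andR
  | _, _, .impL .. => .impL
  | _, _, .impR .. => .impR
  | _, _, .allL .. => .allL
  | _, _, .allR .. => .allR
  | _, _, .exL .. => .exL
  | _, _, .exR .. => .exR
  | _, _, .eqL .. => .eqL
  | _, _, .eqR .. => .eqR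
  | _, _, .ul .. => .ul
  | _, _, .ur .. => .ur
  | _, _, .freshL .. => .freshL

def RuleApp.substsOf : {c : GSequent (Formula S)} → {ps : List (GSequent (Formula S))} →
    RuleApp Φ c ps → Set (Subst S)
  | _, _, .substR _ _ θ _ => {θ}
  | _, _, _ => ∅

/-- The "corresponding occurrence" relation of a rule instance: how an
inductive-predicate occurrence in the antecedent of the conclusion relates to
one in the antecedent of the `k`-th premise. -/
def RuleApp.core : {c : GSequent (Formula S)} → {ps : List (GSequent (Formula S))} →
    RuleApp Φ c ps → ℕ → Formula S → Formula S → Prop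
  | _, _, .substR _ _ θ _ => fun _ C C' => C = Formula.subst C' θ
  | _, _, .eqL Γ _ x y t u => fun _ C C' =>
      ∃ ψ ∈ Γ, C = Formula.subst ψ (subst2 x y t u) ∧ C' = Formula.subst ψ (subst2 x y u t)
  | _, _, .ul _ _ P u prods σs _ _ _ _ => fun k C C' =>
      (C ≠ Formula.ind P u ∧ C' = C) ∨
      (C = Formula.ind P u ∧ ∃ h : k < (prods.zip σs).length,
        ∃ pp ∈ ((prods.zip σs).get ⟨k, h⟩).1.indPrems,
          C' = Formula.ind pp.1 (fun i => Term.subst (pp.2 i) ((prods.zip σs).get ⟨k, h⟩).2))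
  | _, _, _ => fun _ C C' => C' = C

/-- The progressing case: at `(UL)`, the traced occurrence is the unfolded one. -/
def RuleApp.progCore : {c : GSequent (Formula S)} → {ps : List (GSequent (Formula S))} →
    RuleApp Φ c ps → ℕ → Formula S → Formula S → Prop
  | _, _, .ul _ _ P u prods σs _ _ _ _ => fun k C C' =>
      C = Formula.ind P u ∧ ∃ h : k < (prods.zip σs).length,
        ∃ pp ∈ ((prods.zip σs).get ⟨k, h⟩).1.indPrems,
          C' = Formula.ind pp.1 (fun i => Term.subst (pp.2 i) ((prods.zip σs).get ⟨k, h⟩).2)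
  | _, _, _ => fun _ _ _ => False

/-- A trace step along a rule instance, into its `k`-th premise. -/
def RuleApp.traceStep {c : GSequent (Formula S)} {ps : List (GSequent (Formula S))}
    (r : RuleApp Φ c ps) (k : ℕ) (C C' : Formula S) : Prop :=
  C ∈ c.1 ∧ Formula.IsInd C ∧ Formula.IsInd C' ∧
  (∃ h : k < ps.length, C' ∈ (ps.get ⟨k, h⟩).1) ∧ RuleApp.core r k C C'

/-- A progressing trace step. -/
def RuleApp.progStep {c : GSequent (Formula S)} {ps : List (GSequent (Formula S))}
    (r : RuleApp Φ c ps) (k : ℕ) (C C' : Formula S) : Prop :=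
  RuleApp.traceStep r k C C' ∧ RuleApp.progCore r k C C'

/-- The derivation system of `CLKID^ω` and `LKID^ω` (cyclic pre-proofs of
`CLKID^ω` are `CPreProof (CLKID S Φ)`, infinitary pre-proofs of `LKID^ω` are
`IPreProof (CLKID S Φ)`). -/
noncomputable def CLKID (S : Signature) (Φ : Finset (Production S)) :
    DerivSystem (GSequent (Formula S)) (Formula S) RuleName (Subst S) where
  App := RuleApp Φ
  name := fun r => RuleApp.name r
  trace := fun r k C C' => RuleApp.traceStep r k C C'
  prog := fun r k C C' => RuleApp.progStep r k C C'
  substs := fun r => RuleApp.substsOf r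
  inAnt := fun e C => C ∈ e.1 ∧ Formula.IsInd C

/-- The names of the genuine `CLKID^ω` rules: everything except the extra
rule `(fresh L)` (and the separation-logic frame rule name). -/
def clkidNames : Set RuleName := {ν | ν ≠ RuleName.freshL ∧ ν ≠ RuleName.frame}

/-- The free variables of a cyclic pre-proof. -/
def CPreProof.FVc (T : CPreProof (CLKID S Φ)) : Set ℕ :=
  {x | ∃ p ∈ T.dom, x ∈ fvSeq (T.seq p)}

/-- The free variables of an infinitary pre-proof. -/
def IPreProof.FVi (T : IPreProof (CLKID S Φ)) : Set ℕ :=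
  {x | ∃ p ∈ T.dom, x ∈ fvSeq (T.seq p)}

/-- The signature with a single unary function symbol `s` and a single unary
inductive predicate symbol `P` (and no ordinary predicate symbols). -/
def sigP : Signature where
  Func := Unit
  arity := fun _ => 1
  OrdPred := Empty
  ordArity := fun q => q.elim
  IndPred := Unit
  indArity := fun _ => 1

/-- The single production `P(x) ⇐ P(s x)` (with `x` the free variable `0`). -/
def prodP : Production sigP where
  pred := ()
  args := fun _ => Term.fvar 0
  ordPrems := []
  indPrems := [⟨(), fun _ => Term.func () (fun _ => Term.fvar 0)⟩]

/-- The definition set `Φ = {P(x) ⇐ P(s x)}`. -/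
def PhiP : Finset (Production sigP) := {prodP}

-- auxiliary development, Part 1: formulas, caseDist evaluation, freshness
namespace PxProof

def Px : Formula sigP := Formula.ind () (fun _ => Term.fvar 0)
def PA : Formula sigP := Formula.ind () (fun _ => Term.func () (fun _ => Term.fvar 0))
def PB : Formula sigP := Formula.ind () (fun _ => Term.func () (fun _ => Term.fvar 1))

def sa : Subst sigP := fun _ => Term.fvar 1
def sb : Subst sigP := fun _ => Term.fvar 0

lemma caseDist_eval (u : Fin 1 → Term sigP) (σ : Subst sigP) :
    caseDist (S := sigP) ∅ ∅ () u prodP σ =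
      ({Formula.eq (u 0) (σ 0),
        Formula.ind () (fun _ => Term.func () (fun _ => σ 0))}, ∅) := by
  unfold caseDist
  split
  case isFalse h => exact absurd rfl h
  case isTrue h =>
    refine Prod.ext ?_ rfl
    ext φ
    simp only [prodP, Term.subst, Finset.univ_unique, Finset.image_singleton,
      Finset.empty_union, List.map_nil, List.toFinset_nil, Finset.union_empty,
      List.map_cons, List.toFinset_cons, List.toFinset_nil, insert_empty_eq,
      Finset.mem_union, Finset.mem_image, Finset.mem_univ, true_and,
      Finset.mem_singleton, Finset.mem_insert]
    constructor
    · rintro (⟨a, ha'⟩ | h)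
      · left
        have ha : a = (0 : Fin 1) := Subsingleton.elim (α := Fin 1) a 0
        rw [ha] at ha'
        exact ha'.symm
      · right; exact h
    · rintro (h | h)
      · exact Or.inl ⟨(0 : Fin 1), h.symm⟩
      · exact Or.inr h

lemma fv_prodP : ∀ z ∈ Production.fv prodP, z = 0 := by
  intro z hz
  simp [Production.fv, prodP, Term.fv] at hz
  rcases hz with ⟨_, h⟩ | ⟨_, _, h⟩ <;> omega

lemma fresh_const (c : ℕ) (X : Set ℕ) (hc : c ∉ X) :
    Freshening (fun _ => Term.fvar c : Subst sigP) prodP X := by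
  refine ⟨fun z => ⟨c, rfl⟩, ?_, ?_⟩
  · intro z _ y hy
    cases hy
    exact hc
  · intro z1 h1 z2 h2 _
    rw [fv_prodP z1 h1, fv_prodP z2 h2]

lemma fvSeq_single (t : Term sigP) :
    fvSeq ((insert (Formula.ind () (fun _ => t)) ∅, ∅) : GSequent (Formula sigP)) =
      Term.fv t := by
  ext x
  simp [fvSeq, Formula.fv]
  intro _; exact ⟨(0 : Fin 1)⟩

end PxProof
-- Part 2: the sequents and rules of the cyclic proof
namespace PxProof

noncomputable def e1 : GSequent (Formula sigP) :=
  caseDist (S := sigP) ∅ ∅ () (fun _ => Term.fvar 0) prodP sa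
noncomputable def e3 : GSequent (Formula sigP) :=
  caseDist (S := sigP) ∅ ∅ () (fun _ => Term.func () (fun _ => Term.fvar 1)) prodP sb
noncomputable def e5 : GSequent (Formula sigP) :=
  caseDist (S := sigP) ∅ ∅ () (fun _ => Term.func () (fun _ => Term.fvar 0)) prodP sa

lemma e1_eval : e1 = ({Formula.eq (Term.fvar 0) (Term.fvar 1), PB}, ∅) :=
  caseDist_eval _ _
lemma e3_eval : e3 = ({Formula.eq (Term.func () (fun _ => Term.fvar 1)) (Term.fvar 0), PA}, ∅) :=
  caseDist_eval _ _
lemma e5_eval : e5 = ({Formula.eq (Term.func () (fun _ => Term.fvar 0)) (Term.fvar 1), PB}, ∅) :=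
  caseDist_eval _ _

noncomputable def seqn : ℕ → GSequent (Formula sigP)
  | 0 => (insert Px ∅, ∅)
  | 1 => e1
  | 2 => (insert PB ∅, ∅)
  | 3 => e3
  | 4 => (insert PA ∅, ∅)
  | 5 => e5
  | _ + 6 => (insert PB ∅, ∅)

noncomputable def premsn : ℕ → List (GSequent (Formula sigP))
  | 0 => [e1]
  | 1 => [(insert PB ∅, ∅)]
  | 2 => [e3]
  | 3 => [(insert PA ∅, ∅)]
  | 4 => [e5]
  | 5 => [(insert PB ∅, ∅)]
  | _ + 6 => []

lemma fv_Px : (1 : ℕ) ∉ fvSeq ((insert Px ∅, ∅) : GSequent (Formula sigP)) := by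
  rw [show Px = Formula.ind () (fun _ => Term.fvar 0) from rfl]
  rw [fvSeq_single]
  simp [Term.fv]

lemma fv_PB : (0 : ℕ) ∉ fvSeq ((insert PB ∅, ∅) : GSequent (Formula sigP)) := by
  rw [show PB = Formula.ind () (fun _ => Term.func () (fun _ => Term.fvar 1)) from rfl]
  rw [fvSeq_single]
  simp [Term.fv]

lemma fv_PA : (1 : ℕ) ∉ fvSeq ((insert PA ∅, ∅) : GSequent (Formula sigP)) := by
  rw [show PA = Formula.ind () (fun _ => Term.func () (fun _ => Term.fvar 0)) from rfl]
  rw [fvSeq_single]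
  simp [Term.fv]

lemma hall_prodP : ∀ pr : Production sigP, pr ∈ [prodP] ↔ pr ∈ PhiP ∧ pr.pred = () := by
  intro pr
  simp only [PhiP, List.mem_singleton, Finset.mem_singleton]
  exact ⟨fun h => ⟨h, rfl⟩, fun h => h.1⟩

noncomputable def rule0 : RuleApp PhiP (seqn 0) (premsn 0) :=
  RuleApp.ul ∅ ∅ () (fun _ => Term.fvar 0) [prodP] [sa] rfl (by simp)
      hall_prodP
      (by
        rintro ⟨pr, σ⟩ h
        simp only [List.zip_cons_cons, List.zip_nil_right, List.mem_singleton,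
          Prod.mk.injEq] at h
        obtain ⟨rfl, rfl⟩ := h
        exact fresh_const 1 _ fv_Px)
noncomputable def rule1 : RuleApp PhiP (seqn 1) (premsn 1) :=
  RuleApp.wk e1.1 e1.2 (insert PB ∅) ∅
      (by rw [show e1.1 = ({Formula.eq (Term.fvar 0) (Term.fvar 1), PB} : Finset (Formula sigP))
            from congrArg Prod.fst e1_eval]
          intro φ hφ; simp at hφ ⊢; tauto)
      (by rw [show e1.2 = (∅ : Finset (Formula sigP)) from congrArg Prod.snd e1_eval])
noncomputable def rule2 : RuleApp PhiP (seqn 2) (premsn 2) :=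
  RuleApp.ul ∅ ∅ () (fun _ => Term.func () (fun _ => Term.fvar 1)) [prodP] [sb]
      rfl (by simp) hall_prodP
      (by
        rintro ⟨pr, σ⟩ h
        simp only [List.zip_cons_cons, List.zip_nil_right, List.mem_singleton,
          Prod.mk.injEq] at h
        obtain ⟨rfl, rfl⟩ := h
        exact fresh_const 0 _ fv_PB)
noncomputable def rule3 : RuleApp PhiP (seqn 3) (premsn 3) :=
  RuleApp.wk e3.1 e3.2 (insert PA ∅) ∅
      (by rw [show e3.1 = ({Formula.eq (Term.func () (fun _ => Term.fvar 1)) (Term.fvar 0), PA} : Finset (Formula sigP))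
            from congrArg Prod.fst e3_eval]
          intro φ hφ; simp at hφ ⊢; tauto)
      (by rw [show e3.2 = (∅ : Finset (Formula sigP)) from congrArg Prod.snd e3_eval])
noncomputable def rule4 : RuleApp PhiP (seqn 4) (premsn 4) :=
  RuleApp.ul ∅ ∅ () (fun _ => Term.func () (fun _ => Term.fvar 0)) [prodP] [sa]
      rfl (by simp) hall_prodP
      (by
        rintro ⟨pr, σ⟩ h
        simp only [List.zip_cons_cons, List.zip_nil_right, List.mem_singleton,
          Prod.mk.injEq] at h
        obtain ⟨rfl, rfl⟩ := h
        exact fresh_const 1 _ fv_PA)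
noncomputable def rule5 : RuleApp PhiP (seqn 5) (premsn 5) :=
  RuleApp.wk e5.1 e5.2 (insert PB ∅) ∅
      (by rw [show e5.1 = ({Formula.eq (Term.func () (fun _ => Term.fvar 0)) (Term.fvar 1), PB} : Finset (Formula sigP))
            from congrArg Prod.fst e5_eval]
          intro φ hφ; simp at hφ ⊢; tauto)
      (by rw [show e5.2 = (∅ : Finset (Formula sigP)) from congrArg Prod.snd e5_eval])

noncomputable def rulen : (n : ℕ) → n < 6 → RuleApp PhiP (seqn n) (premsn n)
  | 0, _ => rule0
  | 1, _ => rule1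
  | 2, _ => rule2
  | 3, _ => rule3
  | 4, _ => rule4
  | 5, _ => rule5
  | (n + 6), h => absurd h (by omega)

end PxProof
-- Part 3: the cyclic pre-proof
namespace PxProof

lemma replicate_append (p : List ℕ) (i n : ℕ) (h : p ++ [i] = List.replicate n 0) :
    p = List.replicate p.length 0 ∧ i = 0 ∧ n = p.length + 1 := by
  have hlen : p.length + 1 = n := by
    have := congrArg List.length h
    simpa using this
  subst hlen
  rw [List.replicate_succ'] at h
  have h2 := List.append_inj h (by simp)
  refine ⟨h2.1, by simpa using h2.2, rfl⟩

noncomputable def T : CPreProof (CLKID sigP PhiP) where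
  dom := {l : List ℕ | ∃ n ≤ 6, l = List.replicate n 0}
  fin := by
    have : {l : List ℕ | ∃ n ≤ 6, l = List.replicate n 0} =
        (fun n => List.replicate n 0) '' Set.Iic 6 := by
      ext l
      simp [Set.mem_image, eq_comm]
    rw [this]
    exact (Set.finite_Iic 6).image _
  root_mem := ⟨0, by omega, rfl⟩
  down := by
    rintro p i ⟨n, hn, he⟩
    obtain ⟨h1, _, h3⟩ := replicate_append p i n he
    exact ⟨p.length, by omega, h1⟩
  seq := fun l => seqn l.length
  prems := fun l => premsn l.length
  bud := fun l => l.length == 6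
  rule := fun p hp hb => rulen p.length (by
    obtain ⟨n, hn, rfl⟩ := hp
    simp only [List.length_replicate, beq_eq_false_iff_ne, ne_eq] at hb ⊢
    omega)
  child_mem := by
    rintro p ⟨n, hn, rfl⟩ hb i
    simp only [List.length_replicate, beq_eq_false_iff_ne, ne_eq] at hb
    constructor
    · rintro ⟨m, hm, he⟩
      obtain ⟨_, hi, _⟩ := replicate_append _ i m he
      subst hi
      have : n ≤ 5 := by omega
      interval_cases n <;> simp [premsn]
    · intro hi
      have hn5 : n ≤ 5 := by omega
      change i < (premsn (List.replicate n 0).length).length at hi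
      have hi0 : i = 0 := by
        have : (premsn (List.replicate n 0).length).length = 1 := by
          simp only [List.length_replicate]
          interval_cases n <;> simp [premsn]
        omega
      subst hi0
      exact ⟨n + 1, by omega, by rw [List.replicate_succ']⟩
  child_seq := by
    rintro p ⟨n, hn, rfl⟩ hb i h
    simp only [List.length_replicate, beq_eq_false_iff_ne, ne_eq] at hb
    have hn5 : n ≤ 5 := by omega
    simp only [List.length_append, List.length_replicate, List.length_singleton]
    interval_cases n <;>
      · have hi0 : i = 0 := by simp [premsn] at h; omega
        subst hi0
        rfl
  bud_leaf := by
    rintro p ⟨n, hn, rfl⟩ hb i ⟨m, hm, he⟩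
    simp only [List.length_replicate, beq_iff_eq] at hb
    obtain ⟨_, _, h3⟩ := replicate_append _ i m he
    simp [List.length_replicate] at h3
    omega
  comp := fun _ => List.replicate 2 0
  comp_mem := fun p _ _ => ⟨2, by omega, rfl⟩
  comp_not_bud := fun p _ _ => by simp
  comp_seq := by
    rintro p ⟨n, hn, rfl⟩ hb
    simp only [List.length_replicate, beq_iff_eq] at hb
    subst hb
    rfl

end PxProof
-- Part 4: trace lemmas
namespace PxProof

def tok : ℕ → Formula sigP
  | 0 => Px
  | 3 => PA
  | 4 => PA
  | _ => PB

lemma tok_isInd (n : ℕ) : Formula.IsInd (tok n) := by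
  match n with
  | 0 => trivial
  | 1 => trivial
  | 2 => trivial
  | 3 => trivial
  | 4 => trivial
  | 5 => trivial
  | _ + 6 => trivial

lemma t0 : RuleApp.progStep rule0 0 Px PB := by
  have hcore : RuleApp.progCore rule0 0 Px PB := by
    simp only [rule0, RuleApp.progCore]
    refine ⟨rfl, by simp, ⟨(), fun _ => Term.func () (fun _ => Term.fvar 0)⟩, by simp [prodP], rfl⟩
  refine ⟨⟨?_, trivial, trivial, ⟨by simp [premsn], ?_⟩, ?_⟩, hcore⟩
  · exact Finset.mem_insert_self _ _
  · show PB ∈ (e1.1 : Finset (Formula sigP))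
    rw [e1_eval]; simp
  · simp only [rule0, RuleApp.core]
    exact Or.inr hcore
  
lemma t2 : RuleApp.progStep rule2 0 PB PA := by
  have hcore : RuleApp.progCore rule2 0 PB PA := by
    simp only [rule2, RuleApp.progCore]
    refine ⟨rfl, by simp, ⟨(), fun _ => Term.func () (fun _ => Term.fvar 0)⟩, by simp [prodP], rfl⟩
  refine ⟨⟨?_, trivial, trivial, ⟨by simp [premsn], ?_⟩, ?_⟩, hcore⟩
  · exact Finset.mem_insert_self _ _
  · show PA ∈ (e3.1 : Finset (Formula sigP))
    rw [e3_eval]; simp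
  · simp only [rule2, RuleApp.core]
    exact Or.inr hcore

lemma t4 : RuleApp.progStep rule4 0 PA PB := by
  have hcore : RuleApp.progCore rule4 0 PA PB := by
    simp only [rule4, RuleApp.progCore]
    refine ⟨rfl, by simp, ⟨(), fun _ => Term.func () (fun _ => Term.fvar 0)⟩, by simp [prodP], rfl⟩
  refine ⟨⟨?_, trivial, trivial, ⟨by simp [premsn], ?_⟩, ?_⟩, hcore⟩
  · exact Finset.mem_insert_self _ _
  · show PB ∈ (e5.1 : Finset (Formula sigP))
    rw [e5_eval]; simp
  · simp only [rule4, RuleApp.core]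
    exact Or.inr hcore

lemma t1 : RuleApp.traceStep rule1 0 PB PB := by
  refine ⟨?_, trivial, trivial, ⟨by simp [premsn], ?_⟩, ?_⟩
  · show PB ∈ (e1.1 : Finset (Formula sigP))
    rw [e1_eval]; simp
  · exact Finset.mem_insert_self _ _
  · exact rfl

lemma t3 : RuleApp.traceStep rule3 0 PA PA := by
  refine ⟨?_, trivial, trivial, ⟨by simp [premsn], ?_⟩, ?_⟩
  · show PA ∈ (e3.1 : Finset (Formula sigP))
    rw [e3_eval]; simp
  · exact Finset.mem_insert_self _ _
  · exact rfl

lemma t5 : RuleApp.traceStep rule5 0 PB PB := by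
  refine ⟨?_, trivial, trivial, ⟨by simp [premsn], ?_⟩, ?_⟩
  · show PB ∈ (e5.1 : Finset (Formula sigP))
    rw [e5_eval]; simp
  · exact Finset.mem_insert_self _ _
  · exact rfl

lemma trace_all (c : ℕ) (h : c < 6) :
    RuleApp.traceStep (rulen c h) 0 (tok c) (tok (c + 1)) := by
  interval_cases c
  · exact t0.1
  · exact t1
  · exact t2.1
  · exact t3
  · exact t4.1
  · exact t5

lemma prog_all (c : ℕ) (h : c < 6) (hc : c = 0 ∨ c = 2 ∨ c = 4) :
    RuleApp.progStep (rulen c h) 0 (tok c) (tok (c + 1)) := by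
  interval_cases c
  · exact t0
  · omega
  · exact t2
  · omega
  · exact t4
  · omega

lemma name_rulen (c : ℕ) (h : c < 6) :
    RuleApp.name (rulen c h) = RuleName.ul ∨ RuleApp.name (rulen c h) = RuleName.wk := by
  interval_cases c
  · exact Or.inl rfl
  · exact Or.inr rfl
  · exact Or.inl rfl
  · exact Or.inr rfl
  · exact Or.inl rfl
  · exact Or.inr rfl

end PxProof
/-- Cut-free provability of `P(x) ⊢ ⊥` in `CLKID^ω` without
substitution. For `P` defined by the single production `P(x) ⇐ P(sx)`, the
sequent `P(x) ⊢ ⊥` (formalized with the empty succedent, which is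
unsatisfiable) is provable in cut-free `CLKID^ω` — with the standard
case-distinction left-unfolding rule (UL) — without any use of (Subst) (and
without the added rule `(fresh L)`). -/
theorem px_bot_provable_cut_free_subst_free :
    (CLKID sigP PhiP).ProvableWith
      (clkidNames ∩ {ν | ν ≠ RuleName.cut ∧ ν ≠ RuleName.subst})
      ({Formula.ind () (fun _ => Term.fvar 0)}, (∅ : Finset (Formula sigP))) := by
  refine ⟨PxProof.T, ?_, ?_, ?_⟩
  · -- root sequent
    show PxProof.seqn 0 = _
    simp [PxProof.seqn, PxProof.Px]
  · -- global trace condition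
    intro π
    have hshape : ∀ n, π.pos n = List.replicate (π.pos n).length 0 ∧ (π.pos n).length ≤ 6 := by
      intro n
      obtain ⟨m, hm, he⟩ := π.mem n
      rw [he]; simp [hm]
    have hstep : ∀ n, ((π.pos n).length = 6 ∧ π.pos (n+1) = List.replicate 2 0) ∨
        ((π.pos n).length ≤ 5 ∧ π.pos (n+1) = π.pos n ++ [0]) := by
      intro n
      rcases π.step n with ⟨hb, hc⟩ | ⟨i, hc, hd⟩
      · left
        change ((π.pos n).length == 6) = true at hb
        exact ⟨by simpa using hb, hc⟩
      · right
        obtain ⟨m, hm, he⟩ := hd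
        obtain ⟨_, h2, h3⟩ := PxProof.replicate_append _ _ _ he
        subst h2
        exact ⟨by omega, hc⟩
    have hlen : ∀ n, ((π.pos n).length = 6 ∧ (π.pos (n+1)).length = 2) ∨
        ((π.pos n).length ≤ 5 ∧ (π.pos (n+1)).length = (π.pos n).length + 1) := by
      intro n
      rcases hstep n with ⟨h1, h2⟩ | ⟨h1, h2⟩
      · exact Or.inl ⟨h1, by rw [h2]; simp⟩
      · exact Or.inr ⟨h1, by rw [h2]; simp⟩
    refine ⟨0, fun n => PxProof.tok (π.pos n).length,
      fun n => decide ((π.pos n).length = 0 ∨ (π.pos n).length = 2 ∨ (π.pos n).length = 4),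
      ?_, ?_⟩
    · intro n _
      rcases hstep n with ⟨h6, hc⟩ | ⟨h5, hc⟩
      · -- bud-companion step
        left
        have hl2 : (π.pos (n+1)).length = 2 := by rw [hc]; simp
        refine ⟨?_, hc, ?_, ⟨?_, PxProof.tok_isInd _⟩, ?_⟩
        · change ((π.pos n).length == 6) = true
          simp [h6]
        · show PxProof.tok (π.pos (n+1)).length = PxProof.tok (π.pos n).length
          rw [hl2, h6]
          rfl
        · show PxProof.tok (π.pos n).length ∈ (PxProof.seqn (π.pos n).length).1
          rw [h6]
          exact Finset.mem_insert_self _ _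
        · simp [h6]
      · -- ordinary rule step
        right
        have hb : PxProof.T.bud (π.pos n) = false := by
          change ((π.pos n).length == 6) = false
          simp; omega
        have hlt : (π.pos n).length < 6 := by omega
        have hl2 : (π.pos (n+1)).length = (π.pos n).length + 1 := by rw [hc]; simp
        refine ⟨π.mem n, hb, 0, hc, ?_, ?_⟩
        · show RuleApp.traceStep (PxProof.rulen (π.pos n).length hlt) 0
            (PxProof.tok (π.pos n).length) (PxProof.tok (π.pos (n+1)).length)
          rw [hl2]
          exact PxProof.trace_all _ hlt
        · intro hbt
          show RuleApp.progStep (PxProof.rulen (π.pos n).length hlt) 0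
            (PxProof.tok (π.pos n).length) (PxProof.tok (π.pos (n+1)).length)
          rw [hl2]
          exact PxProof.prog_all _ hlt (by simpa using hbt)
    · intro m
      have h1 := (hshape m).2
      have ha := hlen m
      have hb' := hlen (m+1)
      have key : ((π.pos m).length = 0 ∨ (π.pos m).length = 2 ∨ (π.pos m).length = 4) ∨
          ((π.pos (m+1)).length = 0 ∨ (π.pos (m+1)).length = 2 ∨ (π.pos (m+1)).length = 4) ∨
          ((π.pos (m+1+1)).length = 0 ∨ (π.pos (m+1+1)).length = 2 ∨
            (π.pos (m+1+1)).length = 4) := by omega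
      rcases key with h | h | h
      · exact ⟨m, le_refl m, by simpa using h⟩
      · exact ⟨m+1, by omega, by simpa using h⟩
      · exact ⟨m+2, by omega, by simpa using h⟩
  · -- only (UL) and (Wk) are used
    rintro ν ⟨p, hp, hb, rfl⟩
    have hlt : p.length < 6 := by
      obtain ⟨n, hn, rfl⟩ := hp
      change ((List.replicate n 0).length == 6) = false at hb
      simp at hb ⊢
      omega
    have hname : RuleApp.name (PxProof.rulen p.length hlt) = RuleName.ul ∨
        RuleApp.name (PxProof.rulen p.length hlt) = RuleName.wk := PxProof.name_rulen _ hlt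
    show RuleApp.name (PxProof.rulen p.length hlt) ∈ _
    rcases hname with h | h <;> rw [h] <;>
      exact ⟨⟨by simp [clkidNames], by simp [clkidNames]⟩, by simp, by simp⟩

end CyclicProofs
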